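/- Exponential decay of the normalized immigration contribution: fix t ∈ ℝ such that Λ(t) > 0 and E[log⁺(Y_0(t)/m_0(t))] < ∞. Then almost surely limsup_{n→∞} (1/n) log [Π_{n+1}(t)^{−1} Y_n(t)] ≤ −Λ(t). -/

import Mathlib

open MeasureTheory ProbabilityTheory Filter Set
open scoped ENNReal NNReal Topology

noncomputable section

/-- The positive part of the logarithm, `log⁺ x = max (log x) 0`. -/
def logPlus (x : ℝ) : ℝ := max (Real.log x) 0

/-- Extended logarithm on `ℝ≥0∞`, with `elog 0 = ⊥` and `elog ⊤ = ⊤`. -/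
def elog (x : ℝ≥0∞) : EReal :=
  if x = 0 then ⊥ else if x = ⊤ then ⊤ else ((Real.log x.toReal : ℝ) : EReal)

/-- The standard normal distribution function `Φ`. -/
def gaussCDF (x : ℝ) : ℝ :=
  (Real.sqrt (2 * Real.pi))⁻¹ * ∫ t in Set.Iic x, Real.exp (-(t ^ 2) / 2)

/-- A wrapper around `MeasurableSpace Ω`, used for sub-σ-algebra fields so that they do
not interfere with instance resolution. -/
structure SubSigmaAlgebra (Ω : Type) : Type where
  /-- the underlying σ-algebra -/
  σalg : MeasurableSpace Ω

/-- A branching random walk with immigration in a stationary and ergodic random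
environment indexed by time (BRWIRE).

Particles of the tree generated by the initial particle `∅` are labelled by Ulam-Harris
words `u : List ℕ` (children of `u` are `i :: u`, the generation of `u` is its length).
`Nx u` is the offspring number `N(u)` and `Lx u i` the displacement `L_{i+1}(u)`.
At time `n+1`, `V n` new immigrants arrive, located at `SI n i` (`i < V n`); the subtree
generated by the immigrant `0_n j` has offspring numbers `NI n j u` and displacements
`LI n j u i`.

The environment is represented by the sub-σ-algebra `𝔈` it generates, together with an
ergodic measure-preserving shift `θ`; `𝔊` is the σ-algebra generated by the environment
and the whole immigration sequence `Y = (Y_n)`.  Quenched laws and expectations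
`P_ξ, E_ξ` (resp. `P_{ξ,Y}, E_{ξ,Y}`) are realised as (kernels/expectations of)
conditioning on `𝔈` (resp. `𝔊`).

`m0 t` is the random variable `m_0(t) = E_ξ Σ_{i≤N} e^{t L_i}` attached to the first
environment coordinate, so that `m_n(t) = m_0(t) ∘ θ^[n]`; similarly `s0 = σ_0²`, with
`σ_n² = σ_0² ∘ θ^[n]` and `E_ξ Σ_{i≤N(u)} L_i(u)² = m_n σ_n²` for `|u| = n`.

The structure includes the standing assumptions of the paper: supercriticality
`E log m_0 > 0`, and `P_ξ(N = 0) = 0`, `P_ξ(N = 1) < 1`, `E_ξ Σ_{i≤N} L_i = 0` a.s.,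
conditional independence (given the environment) of all the reproduction and
immigration random vectors, and stationarity of the immigration data. -/
structure BRWIRE (Ω : Type) [MeasurableSpace Ω] [StandardBorelSpace Ω]
    (μ : Measure Ω) [IsFiniteMeasure μ] where
  /-- σ-algebra generated by the environment `ξ` -/
  𝔈 : SubSigmaAlgebra Ω
  /-- σ-algebra generated by the environment `ξ` and the immigration sequence `Y` -/
  𝔊 : SubSigmaAlgebra Ω
  hEG : 𝔈.σalg ≤ 𝔊.σalg
  hGF : 𝔊.σalg ≤ (inferInstance : MeasurableSpace Ω)
  /-- the shift of the environment -/
  θ : Ω → Ω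
  hθ : Ergodic θ μ
  /-- offspring numbers in the tree of the initial particle -/
  Nx : List ℕ → Ω → ℕ
  /-- displacements in the tree of the initial particle -/
  Lx : List ℕ → ℕ → Ω → ℝ
  /-- numbers of immigrants: `V n` immigrants join generation `n+1` -/
  V : ℕ → Ω → ℕ
  /-- positions `S_{0_n i}` of the immigrants -/
  SI : ℕ → ℕ → Ω → ℝ
  /-- offspring numbers in the subtree of the immigrant `0_n j` -/
  NI : ℕ → ℕ → List ℕ → Ω → ℕ
  /-- displacements in the subtree of the immigrant `0_n j` -/
  LI : ℕ → ℕ → List ℕ → ℕ → Ω → ℝ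
  /-- the random variable `m_0(t)`, a function of the environment coordinate `ξ_0` -/
  m0 : ℝ → Ω → ℝ
  /-- the random variable `σ_0²`, a function of the environment coordinate `ξ_0` -/
  s0 : Ω → ℝ
  measNx : ∀ u, Measurable (Nx u)
  measLx : ∀ u i, Measurable (Lx u i)
  measV : ∀ n, Measurable[𝔊.σalg] (V n)
  measSI : ∀ n i, Measurable[𝔊.σalg] (SI n i)
  measNI : ∀ n j u, Measurable (NI n j u)
  measLI : ∀ n j u i, Measurable (LI n j u i)
  measm0 : ∀ t, Measurable[𝔈.σalg] (m0 t)
  meass0 : Measurable[𝔈.σalg] s0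
  measθ : Measurable θ
  m0pos : ∀ t ω, 0 < m0 t ω
  s0nonneg : ∀ ω, 0 ≤ s0 ω
  /-- `E_ξ Σ_{i≤N(u)} e^{t L_i(u)} = m_{|u|}(t) = m_0(t) ∘ θ^[|u|]` -/
  hm : ∀ (t : ℝ) (u : List ℕ),
    (μ[fun ω => ∑ i ∈ Finset.range (Nx u ω), Real.exp (t * Lx u i ω)|𝔈.σalg])
      =ᵐ[μ] fun ω => m0 t (θ^[u.length] ω)
  /-- the same for the particles of the subtree of the immigrant `0_k j`,
  whose node `u` belongs to generation `k + 1 + |u|` -/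
  hmI : ∀ (t : ℝ) (k j : ℕ) (u : List ℕ),
    (μ[fun ω => ∑ i ∈ Finset.range (NI k j u ω), Real.exp (t * LI k j u i ω)|𝔈.σalg])
      =ᵐ[μ] fun ω => m0 t (θ^[k + 1 + u.length] ω)
  /-- `E_ξ Σ_{i≤N(u)} L_i(u)² = m_{|u|} σ_{|u|}²` -/
  hs : ∀ u : List ℕ,
    (μ[fun ω => ∑ i ∈ Finset.range (Nx u ω), (Lx u i ω) ^ 2|𝔈.σalg])
      =ᵐ[μ] fun ω => m0 0 (θ^[u.length] ω) * s0 (θ^[u.length] ω)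
  /-- `P_ξ(N = 0) = 0` a.s. -/
  hNpos : ∀ u, ∀ᵐ ω ∂μ, 1 ≤ Nx u ω
  hNIpos : ∀ k j u, ∀ᵐ ω ∂μ, 1 ≤ NI k j u ω
  /-- `P_ξ(N = 1) < 1` a.s. -/
  hNone : ∀ u, ∀ᵐ ω ∂μ,
    (μ[fun ω' => if Nx u ω' = 1 then (1 : ℝ) else 0|𝔈.σalg]) ω < 1
  /-- `E_ξ Σ_{i≤N} L_i = 0` a.s. -/
  hLzero : ∀ u, (μ[fun ω => ∑ i ∈ Finset.range (Nx u ω), Lx u i ω|𝔈.σalg]) =ᵐ[μ] 0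
  /-- supercriticality: `E log m_0 > 0` -/
  hsuper : 0 < ∫ ω, Real.log (m0 0 ω) ∂μ
  /-- stationarity of the immigration data -/
  hYstat : ∀ n, μ.map (fun ω => ((V n ω, fun i => SI n i ω) : ℕ × (ℕ → ℝ)))
      = μ.map (fun ω => ((V 0 ω, fun i => SI 0 i ω) : ℕ × (ℕ → ℝ)))
  /-- given the environment, all the reproduction and immigration random vectors
  are independent -/
  hindep : iCondIndepFun 𝔈.σalg (hEG.trans hGF)
      (Sum.elim (fun (u : List ℕ) ω => ((Nx u ω, fun i => Lx u i ω) : ℕ × (ℕ → ℝ)))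
        (Sum.elim (fun (n : ℕ) ω => ((V n ω, fun i => SI n i ω) : ℕ × (ℕ → ℝ)))
          (fun (p : ℕ × ℕ × List ℕ) ω =>
            ((NI p.1 p.2.1 p.2.2 ω, fun i => LI p.1 p.2.1 p.2.2 i ω) : ℕ × (ℕ → ℝ))))) μ

namespace BRWIRE

variable {Ω : Type} [MeasurableSpace Ω] [StandardBorelSpace Ω]
  {μ : Measure Ω} [IsFiniteMeasure μ]

/-- the σ-algebra generated by the environment `ξ` -/
def mE (X : BRWIRE Ω μ) : MeasurableSpace Ω := X.𝔈.σalg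

/-- the σ-algebra generated by the environment `ξ` and the immigration sequence `Y` -/
def mG (X : BRWIRE Ω μ) : MeasurableSpace Ω := X.𝔊.σalg

/-- `𝕋ₙ^X`: the generation-`n` particles of the tree of the initial particle. -/
def tree (X : BRWIRE Ω μ) : ℕ → Ω → Finset (List ℕ)
  | 0, _ => {[]}
  | n + 1, ω => (X.tree n ω).biUnion fun u => (Finset.range (X.Nx u ω)).image fun i => i :: u

/-- position `S_u` of the particle `u` of the tree of the initial particle -/
def pos (X : BRWIRE Ω μ) : List ℕ → Ω → ℝ
  | [], _ => 0
  | i :: u, ω => X.pos u ω + X.Lx u i ω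

/-- generation-`n` particles of the subtree of the immigrant `0_k j` -/
def treeI (X : BRWIRE Ω μ) (k j : ℕ) : ℕ → Ω → Finset (List ℕ)
  | 0, _ => {[]}
  | n + 1, ω => (X.treeI k j n ω).biUnion fun u =>
      (Finset.range (X.NI k j u ω)).image fun i => i :: u

/-- position, relative to `S_{0_k j}`, of the particle `u` of the subtree of `0_k j` -/
def posI (X : BRWIRE Ω μ) (k j : ℕ) : List ℕ → Ω → ℝ
  | [], _ => 0
  | i :: u, ω => X.posI k j u ω + X.LI k j u i ω

/-- `m_n(t) = m_0(t) ∘ θ^[n]` -/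
def mfun (X : BRWIRE Ω μ) (n : ℕ) (t : ℝ) (ω : Ω) : ℝ := X.m0 t (X.θ^[n] ω)

/-- `σ_n² = σ_0² ∘ θ^[n]` -/
def sigmaSq (X : BRWIRE Ω μ) (n : ℕ) (ω : Ω) : ℝ := X.s0 (X.θ^[n] ω)

/-- `b_n = (Σ_{i<n} σ_i²)^{1/2}` -/
def bfun (X : BRWIRE Ω μ) (n : ℕ) (ω : Ω) : ℝ :=
  Real.sqrt (∑ i ∈ Finset.range n, X.sigmaSq i ω)

/-- `Π_n(t) = Π_{i<n} m_i(t)` -/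
def Pifun (X : BRWIRE Ω μ) (n : ℕ) (t : ℝ) (ω : Ω) : ℝ :=
  ∏ i ∈ Finset.range n, X.mfun i t ω

/-- `Y_n(t) = Σ_{i≤V_n} e^{t S_{0_n i}}` -/
def Yfun (X : BRWIRE Ω μ) (n : ℕ) (t : ℝ) (ω : Ω) : ℝ :=
  ∑ i ∈ Finset.range (X.V n ω), Real.exp (t * X.SI n i ω)

/-- `Z̄_n(t) = Σ_{u ∈ 𝕋ₙ^X} e^{t S_u}` -/
def Zbar (X : BRWIRE Ω μ) (n : ℕ) (t : ℝ) (ω : Ω) : ℝ :=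
  ∑ u ∈ X.tree n ω, Real.exp (t * X.pos u ω)

/-- `Z̃_n(t) = Σ_{u ∈ 𝕋ₙ} e^{t S_u}`, the sum running over all generation-`n`
particles: descendants of `∅` and descendants of the immigrants -/
def Zt (X : BRWIRE Ω μ) (n : ℕ) (t : ℝ) (ω : Ω) : ℝ :=
  X.Zbar n t ω + ∑ k ∈ Finset.range n, ∑ j ∈ Finset.range (X.V k ω),
    ∑ u ∈ X.treeI k j (n - (k + 1)) ω, Real.exp (t * (X.SI k j ω + X.posI k j u ω))

/-- the counting measure `Z_n(⬝) = Σ_{u ∈ 𝕋ₙ} δ_{S_u}(⬝)` -/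
def Zmeas (X : BRWIRE Ω μ) (n : ℕ) (ω : Ω) : Measure ℝ :=
  (∑ u ∈ X.tree n ω, Measure.dirac (X.pos u ω)) +
    ∑ k ∈ Finset.range n, ∑ j ∈ Finset.range (X.V k ω),
      ∑ u ∈ X.treeI k j (n - (k + 1)) ω, Measure.dirac (X.SI k j ω + X.posI k j u ω)

/-- `W_n(t) = Z̃_n(t)/Π_n(t)` -/
def Wfun (X : BRWIRE Ω μ) (n : ℕ) (t : ℝ) (ω : Ω) : ℝ := X.Zt n t ω / X.Pifun n t ω

/-- `W̄_n(t) = Z̄_n(t)/Π_n(t)` -/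
def Wbar (X : BRWIRE Ω μ) (n : ℕ) (t : ℝ) (ω : Ω) : ℝ := X.Zbar n t ω / X.Pifun n t ω

/-- `W̄_m(0_k j, t)`: the normalized partition function of generation `m` of the
branching random walk (without immigration) originating from the immigrant `0_k j`
(a particle of generation `k+1`), normalized by `Π_{l=k+1}^{k+m} m_l(t)`. -/
def WbarI (X : BRWIRE Ω μ) (k j m : ℕ) (t : ℝ) (ω : Ω) : ℝ :=
  (∑ u ∈ X.treeI k j m ω, Real.exp (t * X.posI k j u ω)) /
    ∏ l ∈ Finset.Ico (k + 1) (k + 1 + m), X.mfun l t ω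

/-- `Λ(t) = E log m_0(t)` -/
def Lambda (X : BRWIRE Ω μ) (t : ℝ) : ℝ := ∫ ω, Real.log (X.m0 t ω) ∂μ

/-- `t₋ = inf {t : t Λ'(t) - Λ(t) ≤ 0}` (as an extended real number) -/
def tminus (X : BRWIRE Ω μ) : EReal :=
  sInf ((fun t : ℝ => (t : EReal)) '' {t : ℝ | t * deriv X.Lambda t - X.Lambda t ≤ 0})

/-- `t₊ = sup {t : t Λ'(t) - Λ(t) ≤ 0}` (as an extended real number) -/
def tplus (X : BRWIRE Ω μ) : EReal :=
  sSup ((fun t : ℝ => (t : EReal)) '' {t : ℝ | t * deriv X.Lambda t - X.Lambda t ≤ 0})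

/-- `t₁ = inf {t : Λ(t) < 0}` (as an extended real number) -/
def t1 (X : BRWIRE Ω μ) : EReal :=
  sInf ((fun t : ℝ => (t : EReal)) '' {t : ℝ | X.Lambda t < 0})

/-- `t₂ = sup {t : Λ(t) < 0}` (as an extended real number) -/
def t2 (X : BRWIRE Ω μ) : EReal :=
  sSup ((fun t : ℝ => (t : EReal)) '' {t : ℝ | X.Lambda t < 0})

/-- `Λ̄(t)`: equals `Λ(t)` on `(t₋, t₊)`, `t Λ'(t₊)` for `t ≥ t₊` and
`t Λ'(t₋)` for `t ≤ t₋`. -/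
def LambdaBar (X : BRWIRE Ω μ) (t : ℝ) : ℝ :=
  if X.tplus ≤ (t : EReal) then t * deriv X.Lambda X.tplus.toReal
  else if (t : EReal) ≤ X.tminus then t * deriv X.Lambda X.tminus.toReal
  else X.Lambda t

/-- `Λ̃(t) = max {Λ̄(t), 0}` -/
def LambdaTilde (X : BRWIRE Ω μ) (t : ℝ) : ℝ := max (X.LambdaBar t) 0

/-- the Legendre transform `Λ̃*(x) = sup_t {xt - Λ̃(t)}` (with values in `EReal`) -/
def LambdaStar (X : BRWIRE Ω μ) (x : ℝ) : EReal :=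
  ⨆ t : ℝ, ((x * t - X.LambdaTilde t : ℝ) : EReal)

/-- Assumption (H1): `E|L_1| < ∞`, `E|log m_0(t)| < ∞`, `E|m_0'(t)/m_0(t)| < ∞` and
`E|log Y_0(t)| < ∞` for all `t ∈ ℝ`. -/
def H1 (X : BRWIRE Ω μ) : Prop :=
  Integrable (fun ω => |X.Lx [] 0 ω|) μ ∧
  (∀ t : ℝ, Integrable (fun ω => |Real.log (X.m0 t ω)|) μ) ∧
  (∀ t : ℝ, Integrable (fun ω => |deriv (fun s => X.m0 s ω) t / X.m0 t ω|) μ) ∧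
  (∀ t : ℝ, Integrable (fun ω => |Real.log (X.Yfun 0 t ω)|) μ)

/-- Case II: `t₁ < t₋ < t₂ < 0`. -/
def CaseII (X : BRWIRE Ω μ) : Prop :=
  X.t1 < X.tminus ∧ X.tminus < X.t2 ∧ X.t2 < (0 : EReal)

/-- Case III: `0 < t₁ < t₊ < t₂`. -/
def CaseIII (X : BRWIRE Ω μ) : Prop :=
  (0 : EReal) < X.t1 ∧ X.t1 < X.tplus ∧ X.tplus < X.t2

/-- the natural filtration generated by the branching process -/
def natFiltration (X : BRWIRE Ω μ) (n : ℕ) : MeasurableSpace Ω :=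
  (⨆ (u : List ℕ) (_ : u.length + 1 ≤ n),
      (MeasurableSpace.comap (X.Nx u) inferInstance ⊔
        ⨆ i : ℕ, MeasurableSpace.comap (X.Lx u i) inferInstance)) ⊔
  (⨆ (k : ℕ) (_ : k + 1 ≤ n),
      (MeasurableSpace.comap (X.V k) inferInstance ⊔
        ⨆ i : ℕ, MeasurableSpace.comap (X.SI k i) inferInstance)) ⊔
  (⨆ (k : ℕ) (j : ℕ) (u : List ℕ) (_ : k + 1 + u.length + 1 ≤ n),
      (MeasurableSpace.comap (X.NI k j u) inferInstance ⊔
        ⨆ i : ℕ, MeasurableSpace.comap (X.LI k j u i) inferInstance))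

/-- `Ψ_n(τ) = Π_n^{-1} Σ_{u ∈ 𝕋ₙ} e^{i τ S_u}`, the characteristic function of the
measure `Π_n^{-1} Z_n` -/
def Psi (X : BRWIRE Ω μ) (n : ℕ) (τ : ℝ) (ω : Ω) : ℂ :=
  ((X.Pifun n 0 ω : ℝ) : ℂ)⁻¹ *
    ∫ x : ℝ, Complex.exp (Complex.I * (τ : ℂ) * (x : ℂ)) ∂(X.Zmeas n ω)

/-- `Y_{k-1}(t)`, with the convention `Y_{-1}(t) = 1`. -/
def Yext (X : BRWIRE Ω μ) (k : ℕ) (t : ℝ) (ω : Ω) : ℝ :=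
  if k = 0 then 1 else X.Yfun (k - 1) t ω

/-- `γ_{k,n}(p,t) = Π_{i=k}^{n-1} m_i(t)^{-1} m_i(pt)^{1/p}` -/
def gam (X : BRWIRE Ω μ) (k n : ℕ) (p t : ℝ) (ω : Ω) : ℝ :=
  ∏ i ∈ Finset.Ico k n, (X.mfun i t ω)⁻¹ * X.mfun i (p * t) ω ^ (1 / p)

/-- `E_{T^n ξ} |W̄_1(t) - 1|^p`: the quenched `p`-th moment of
`W̄_1(t) - 1 = Σ_{i≤N(u)} e^{t L_i(u)}/m_n(t) - 1` for a particle `u` of generation `n`. -/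
def oneStep (X : BRWIRE Ω μ) (n : ℕ) (t p : ℝ) (ω : Ω) : ℝ≥0∞ :=
  ∫⁻ ω', ENNReal.ofReal
      |(∑ i ∈ Finset.range (X.Nx (List.replicate n 0) ω'),
          Real.exp (t * X.Lx (List.replicate n 0) i ω')) / X.mfun n t ω - 1| ^ p
    ∂(condExpKernel μ X.mE ω)

end BRWIRE

section LogPlusAux

lemma logPlus_nonneg (x : ℝ) : 0 ≤ logPlus x := le_max_right _ _

lemma measurable_logPlus : Measurable logPlus :=
  Real.measurable_log.max measurable_const

lemma logPlus_mul_le (a b : ℝ) : logPlus (a * b) ≤ logPlus a + logPlus b := by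
  rcases eq_or_ne a 0 with rfl | ha
  · have h0 : logPlus (0 * b) = 0 := by simp [logPlus]
    rw [h0]
    exact add_nonneg (logPlus_nonneg _) (logPlus_nonneg _)
  rcases eq_or_ne b 0 with rfl | hb
  · have h0 : logPlus (a * 0) = 0 := by simp [logPlus]
    rw [h0]
    exact add_nonneg (logPlus_nonneg _) (logPlus_nonneg _)
  unfold logPlus
  rw [Real.log_mul ha hb]
  refine max_le (add_le_add (le_max_left _ _) (le_max_left _ _)) ?_
  exact add_nonneg (le_max_right _ _) (le_max_right _ _)

end LogPlusAux

namespace BCAux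
set_option linter.unusedSectionVars false

variable {α : Type*} [MeasurableSpace α] {μ : Measure α} [IsProbabilityMeasure μ]
variable {T : α → α} {g : α → ℝ}

/-- `maxS T g n ω = max_{0 ≤ k ≤ n} birkhoffSum T g k ω` (recursively). -/
def maxS (T : α → α) (g : α → ℝ) : ℕ → α → ℝ
  | 0, _ => 0
  | n + 1, ω => max (maxS T g n ω) (birkhoffSum T g (n + 1) ω)

lemma maxS_nonneg (n : ℕ) (ω : α) : 0 ≤ maxS T g n ω := by
  induction n with
  | zero => simp [maxS]
  | succ n ih => exact le_trans ih (le_max_left _ _)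

lemma maxS_succ_le_maxS (n : ℕ) (ω : α) : maxS T g n ω ≤ maxS T g (n + 1) ω :=
  le_max_left _ _

lemma maxS_mono {n m : ℕ} (h : n ≤ m) (ω : α) : maxS T g n ω ≤ maxS T g m ω := by
  induction m with
  | zero => simp [Nat.le_zero.mp h]
  | succ m ih =>
    rcases Nat.lt_succ_iff_lt_or_eq.mp (Nat.lt_succ_of_le h) with h' | h'
    · exact le_trans (ih (Nat.lt_succ_iff.mp h')) (le_max_left _ _)
    · subst h'; exact le_refl _

lemma birkhoffSum_le_maxS {k n : ℕ} (h : k ≤ n) (ω : α) :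
    birkhoffSum T g k ω ≤ maxS T g n ω := by
  rcases Nat.eq_zero_or_pos k with rfl | hk
  · simpa [birkhoffSum] using maxS_nonneg n ω
  · obtain ⟨m, rfl⟩ : ∃ m, k = m + 1 := ⟨k - 1, (Nat.succ_pred_eq_of_pos hk).symm⟩
    exact le_trans (le_max_right (maxS T g m ω) _) (maxS_mono h ω)

lemma measurable_birkhoffSum (hT : Measurable T) (hg : Measurable g) (n : ℕ) :
    Measurable (birkhoffSum T g n) :=
  Finset.measurable_sum _ fun i _ => hg.comp (hT.iterate i)

lemma integrable_birkhoffSum (hTm : MeasurePreserving T μ μ)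
    (hg : Integrable g μ) (n : ℕ) : Integrable (birkhoffSum T g n) μ := by
  refine integrable_finset_sum _ fun i _ => ?_
  exact ((hTm.iterate i).integrable_comp hg.aestronglyMeasurable).mpr hg

lemma measurable_maxS (hT : Measurable T) (hg : Measurable g) (n : ℕ) :
    Measurable (maxS T g n) := by
  induction n with
  | zero => simp only [maxS]; exact measurable_const
  | succ n ih => exact ih.max (measurable_birkhoffSum hT hg (n + 1))

lemma integrable_maxS (hTm : MeasurePreserving T μ μ)
    (hg : Integrable g μ) (n : ℕ) : Integrable (maxS T g n) μ := by
  induction n with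
  | zero => simp only [maxS]; exact integrable_const (0 : ℝ)
  | succ n ih =>
    have := ih.sup (integrable_birkhoffSum hTm hg (n + 1))
    exact this

lemma maxS_succ_le (n : ℕ) (ω : α) :
    maxS T g (n + 1) ω ≤ max 0 (g ω + maxS T g n (T ω)) := by
  induction n with
  | zero =>
    simp only [maxS, birkhoffSum_one]
    exact max_le (le_max_left _ _)
      (le_max_of_le_right (by simp [maxS]))
  | succ n ih =>
    refine max_le (le_trans ih ?_) ?_
    · exact max_le_max (le_refl 0) (by gcongr; exact maxS_succ_le_maxS n (T ω))
    · refine le_max_of_le_right ?_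
      rw [birkhoffSum_succ']
      gcongr
      exact birkhoffSum_le_maxS (le_refl _) (T ω)

/-- Garsia's maximal ergodic lemma. -/
lemma maximal_ergodic (hT : Measurable T) (hTm : MeasurePreserving T μ μ)
    (hgm : Measurable g) (hg : Integrable g μ) :
    0 ≤ ∫ ω in {ω | ∃ n, 0 < maxS T g (n + 1) ω}, g ω ∂μ := by
  set A : ℕ → Set α := fun n => {ω | 0 < maxS T g (n + 1) ω} with hA
  have hAmeas : ∀ n, MeasurableSet (A n) := fun n =>
    measurableSet_lt measurable_const (measurable_maxS hT hgm (n + 1))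
  have hAmono : Monotone A := fun n m h ω hω =>
    lt_of_lt_of_le hω (maxS_mono (Nat.succ_le_succ h) ω)
  have hU : {ω | ∃ n, 0 < maxS T g (n + 1) ω} = ⋃ n, A n := by
    ext ω; simp [hA, mem_iUnion]
  have step : ∀ n, 0 ≤ ∫ ω in A n, g ω ∂μ := by
    intro n
    have hQ1 : Integrable (maxS T g (n + 1)) μ := integrable_maxS hTm hg (n + 1)
    have hQT : Integrable (fun ω => maxS T g n (T ω)) μ :=
      (hTm.integrable_comp (integrable_maxS hTm hg n).aestronglyMeasurable).mpr
        (integrable_maxS hTm hg n)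
    have key : ∀ ω ∈ A n, maxS T g (n + 1) ω - maxS T g n (T ω) ≤ g ω := by
      intro ω hω
      have h1 := maxS_succ_le (T := T) (g := g) n ω
      have h2 : maxS T g (n + 1) ω ≤ g ω + maxS T g n (T ω) := by
        rcases max_cases (0 : ℝ) (g ω + maxS T g n (T ω)) with ⟨he, _⟩ | ⟨he, _⟩
        · rw [he] at h1; exact absurd (lt_of_lt_of_le hω h1) (lt_irrefl 0)
        · rwa [he] at h1
      linarith
    set F : α → ℝ := fun ω => maxS T g (n + 1) ω - maxS T g n (T ω) with hF
    have hFint : Integrable F μ := hQ1.sub hQT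
    have I1 : ∫ ω in A n, F ω ∂μ ≤ ∫ ω in A n, g ω ∂μ :=
      setIntegral_mono_on hFint.integrableOn hg.integrableOn (hAmeas n) key
    have I2 : ∫ ω, F ω ∂μ ≤ ∫ ω in A n, F ω ∂μ := by
      have hsplit := integral_add_compl (hAmeas n) hFint
      have hneg : ∫ ω in (A n)ᶜ, F ω ∂μ ≤ 0 := by
        refine setIntegral_nonpos (hAmeas n).compl fun ω hω => ?_
        have h0 : maxS T g (n + 1) ω ≤ 0 := not_lt.mp hω
        have := maxS_nonneg (T := T) (g := g) n (T ω)
        simp only [hF]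
        linarith
      linarith
    have I3 : 0 ≤ ∫ ω, F ω ∂μ := by
      have hsub : ∫ ω, F ω ∂μ = ∫ ω, maxS T g (n + 1) ω ∂μ - ∫ ω, maxS T g n (T ω) ∂μ :=
        integral_sub hQ1 hQT
      have hmap : ∫ ω, maxS T g n (T ω) ∂μ = ∫ ω, maxS T g n ω ∂μ := by
        nth_rewrite 2 [← hTm.map_eq]
        rw [integral_map hT.aemeasurable]
        rw [hTm.map_eq]; exact (measurable_maxS hT hgm n).aestronglyMeasurable
      have hmono := integral_mono (integrable_maxS hTm hg n) hQ1 (fun ω => maxS_succ_le_maxS n ω)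
      rw [hsub, hmap]
      linarith
    linarith
  rw [hU]
  have htend := tendsto_setIntegral_of_monotone hAmeas hAmono hg.integrableOn
  exact ge_of_tendsto' htend step


lemma le_liminf_coe_of_eventually {v : ℕ → ℝ} {x : EReal} {r : ℝ} (hxr : x < (r : EReal))
    (hev : ∀ᶠ n in atTop, r < v n) :
    x ≤ liminf (fun n => ((v n : ℝ) : EReal)) atTop := by
  refine le_trans hxr.le (le_liminf_of_le (by isBoundedDefault) ?_)
  filter_upwards [hev] with n hn
  exact le_of_lt (by exact_mod_cast hn)

/-- If `a n = (u (n+1) - γ) / n` and `b n = u n / n` then the `EReal`-liminfs agree. -/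
lemma liminf_shift (u : ℕ → ℝ) (γ : ℝ) :
    liminf (fun n => (((u (n + 1) - γ) / n : ℝ) : EReal)) atTop
      = liminf (fun n => ((u n / n : ℝ) : EReal)) atTop := by
  apply le_antisymm
  · -- liminf a ≤ liminf b
    refine le_of_forall_lt_imp_le_of_dense fun x hx => ?_
    obtain ⟨s, hxs, hs⟩ := EReal.exists_between_coe_real hx
    obtain ⟨r, hxr, hrs'⟩ := EReal.exists_between_coe_real hxs
    have hrs : r < s := by exact_mod_cast hrs'
    refine le_liminf_coe_of_eventually hxr ?_
    have h1 : ∀ᶠ n in atTop, (s : EReal) < ((u (n + 1) - γ) / n : ℝ) :=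
      eventually_lt_of_lt_liminf hs
    rcases eventually_atTop.mp h1 with ⟨N, hN⟩
    obtain ⟨K, hK⟩ := exists_nat_gt ((r - γ) / (s - r))
    refine eventually_atTop.2 ⟨N + K + 2, fun m hm => ?_⟩
    obtain ⟨k, rfl⟩ : ∃ k, m = k + 1 := ⟨m - 1, by omega⟩
    have hkN : N ≤ k := by omega
    have hkK : (K : ℝ) ≤ k := by exact_mod_cast (by omega : K ≤ k)
    have hkpos : (0 : ℝ) < k := by
      have : 1 ≤ k := by omega
      exact_mod_cast this
    have h2 : s < (u (k + 1) - γ) / k := by exact_mod_cast hN k hkN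
    have h3 : s * k + γ < u (k + 1) := by rw [lt_div_iff₀ hkpos] at h2; linarith
    have h4 : r - γ < (s - r) * k := by
      have h5 : (r - γ) / (s - r) < (k : ℝ) := lt_of_lt_of_le hK hkK
      rw [div_lt_iff₀ (by linarith)] at h5; linarith
    have hk1pos : (0 : ℝ) < ((k + 1 : ℕ) : ℝ) := by positivity
    rw [lt_div_iff₀ hk1pos]
    push_cast
    nlinarith
  · -- liminf b ≤ liminf a
    refine le_of_forall_lt_imp_le_of_dense fun x hx => ?_
    obtain ⟨s, hxs, hs⟩ := EReal.exists_between_coe_real hx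
    obtain ⟨r, hxr, hrs'⟩ := EReal.exists_between_coe_real hxs
    have hrs : r < s := by exact_mod_cast hrs'
    refine le_liminf_coe_of_eventually hxr ?_
    have h1 : ∀ᶠ n in atTop, (s : EReal) < (u n / n : ℝ) :=
      eventually_lt_of_lt_liminf hs
    rcases eventually_atTop.mp h1 with ⟨N, hN⟩
    obtain ⟨K, hK⟩ := exists_nat_gt ((γ - s) / (s - r))
    refine eventually_atTop.2 ⟨N + K + 1, fun n hn => ?_⟩
    have hnN : N ≤ n + 1 := by omega
    have hnK : (K : ℝ) ≤ n := by exact_mod_cast (by omega : K ≤ n)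
    have hnpos : (0 : ℝ) < n := by
      have : 1 ≤ n := by omega
      exact_mod_cast this
    have hn1pos : (0 : ℝ) < ((n + 1 : ℕ) : ℝ) := by positivity
    have h2 : s < u (n + 1) / ((n + 1 : ℕ) : ℝ) := by exact_mod_cast hN (n + 1) hnN
    have h3 : s * ((n : ℝ) + 1) < u (n + 1) := by
      rw [lt_div_iff₀ hn1pos] at h2; push_cast at h2; linarith
    have h4 : γ - s < (s - r) * n := by
      have h5 : (γ - s) / (s - r) < (n : ℝ) := lt_of_lt_of_le hK hnK
      rw [div_lt_iff₀ (by linarith)] at h5; linarith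
    rw [lt_div_iff₀ hnpos]
    nlinarith


section Ergodic
variable {α : Type*} [MeasurableSpace α] {μ : Measure α} [IsProbabilityMeasure μ]
variable {T : α → α} {g : α → ℝ}

/-- The `EReal`-valued liminf of Birkhoff averages. -/
def ll (T : α → α) (g : α → ℝ) (ω : α) : EReal :=
  liminf (fun n => ((birkhoffSum T g n ω / n : ℝ) : EReal)) atTop

lemma ll_comp (ω : α) : ll T g (T ω) = ll T g ω := by
  have h : ∀ n : ℕ, birkhoffSum T g n (T ω) = birkhoffSum T g (n + 1) ω - g ω := fun n => by
    rw [birkhoffSum_succ']; ring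
  unfold ll
  have h2 : (fun n : ℕ => ((birkhoffSum T g n (T ω) / n : ℝ) : EReal))
      = fun n : ℕ => (((birkhoffSum T g (n + 1) ω - g ω) / n : ℝ) : EReal) := by
    funext n; rw [h n]
  rw [h2]
  exact liminf_shift (fun n => birkhoffSum T g n ω) (g ω)

omit [IsProbabilityMeasure μ] in
lemma measurable_ll (hT : Measurable T) (hg : Measurable g) : Measurable (ll T g) := by
  apply Measurable.liminf
  intro n
  exact measurable_coe_real_ereal.comp ((measurable_birkhoffSum hT hg n).div_const _)

/-- One half of Birkhoff's pointwise ergodic theorem for ergodic maps. -/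
lemma ergodic_eventually_gt (hT : Ergodic T μ) (hgm : Measurable g) (hg : Integrable g μ)
    {d : ℝ} (hd : d < ∫ x, g x ∂μ) :
    ∀ᵐ ω ∂μ, ∀ᶠ n in atTop, d * n < birkhoffSum T g n ω := by
  set c : ℝ := (d + ∫ x, g x ∂μ) / 2 with hc
  have hdc : d < c := by rw [hc]; linarith
  have hcI : c < ∫ x, g x ∂μ := by rw [hc]; linarith
  set h : α → ℝ := fun ω => c - g ω with hhdef
  have hhm : Measurable h := measurable_const.sub hgm
  have hhint : Integrable h μ := (integrable_const c).sub hg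
  set E : Set α := {ω | ll T g ω < (c : EReal)} with hE
  have hEmeas : MeasurableSet E :=
    measurableSet_lt (measurable_ll hT.toMeasurePreserving.measurable hgm) measurable_const
  have hEinv : T ⁻¹' E = E := by
    ext ω; simp only [hE, mem_preimage, mem_setOf_eq, ll_comp]
  rcases hT.toPreErgodic.ae_empty_or_univ hEmeas hEinv with h0 | h1
  · have hae : ∀ᵐ ω ∂μ, ω ∉ E := measure_eq_zero_iff_ae_notMem.mp (ae_eq_empty.mp h0)
    filter_upwards [hae] with ω hω
    have hcle : (c : EReal) ≤ ll T g ω := not_lt.mp hω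
    have hdlt : (d : EReal) < ll T g ω :=
      lt_of_lt_of_le (by exact_mod_cast hdc) hcle
    have hev := eventually_lt_of_lt_liminf hdlt
    filter_upwards [hev, eventually_ge_atTop 1] with n hn1 hn2
    have hnpos : (0 : ℝ) < n := by exact_mod_cast hn2
    have hlt : d < birkhoffSum T g n ω / n := by exact_mod_cast hn1
    rw [lt_div_iff₀ hnpos] at hlt; linarith
  · exfalso
    have hμE : μ E = 1 := by
      have := measure_congr h1; simpa using this
    set A : Set α := {ω | ∃ n, 0 < maxS T h (n + 1) ω} with hA
    have hAmeas : MeasurableSet A := by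
      have : A = ⋃ n, {ω | 0 < maxS T h (n + 1) ω} := by
        ext ω; simp [hA, mem_iUnion]
      rw [this]
      exact MeasurableSet.iUnion fun n =>
        measurableSet_lt measurable_const
          (measurable_maxS hT.toMeasurePreserving.measurable hhm (n + 1))
    have hsub : E ⊆ A := by
      intro ω hω
      have hfreq : ∃ᶠ n in atTop, ((birkhoffSum T g n ω / n : ℝ) : EReal) < (c : EReal) :=
        frequently_lt_of_liminf_lt (by isBoundedDefault) hω
      obtain ⟨n, hn1, hn2⟩ := (hfreq.and_eventually (eventually_ge_atTop 1)).exists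
      have hnpos : (0 : ℝ) < n := by exact_mod_cast hn2
      have hlt : birkhoffSum T g n ω / n < c := by exact_mod_cast hn1
      rw [div_lt_iff₀ hnpos] at hlt
      have hSh : birkhoffSum T h n ω = c * n - birkhoffSum T g n ω := by
        simp only [birkhoffSum, hhdef]
        rw [Finset.sum_sub_distrib, Finset.sum_const, Finset.card_range]
        push_cast
        ring
      obtain ⟨m, rfl⟩ : ∃ m, n = m + 1 := ⟨n - 1, by omega⟩
      refine ⟨m, lt_of_lt_of_le ?_ (birkhoffSum_le_maxS (le_refl _) ω)⟩
      rw [hSh]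
      linarith
    have hμA : μ A = 1 := le_antisymm prob_le_one (hμE ▸ measure_mono hsub)
    have hint := maximal_ergodic hT.toMeasurePreserving.measurable hT.toMeasurePreserving hhm hhint
    have hAc : μ Aᶜ = 0 := (prob_compl_eq_zero_iff hAmeas).mpr hμA
    have hzero : ∫ ω in Aᶜ, h ω ∂μ = 0 := by
      rw [Measure.restrict_eq_zero.mpr hAc, integral_zero_measure]
    have hsplit : ∫ ω in A, h ω ∂μ + ∫ ω in Aᶜ, h ω ∂μ = ∫ ω, h ω ∂μ :=
      integral_add_compl hAmeas hhint
    have hneg : ∫ ω, h ω ∂μ = c - ∫ x, g x ∂μ := by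
      rw [hhdef]
      rw [integral_sub (integrable_const c) hg, integral_const]
      simp
    have hintA : (0 : ℝ) ≤ ∫ ω in A, h ω ∂μ := hint
    linarith

/-- Birkhoff's pointwise ergodic theorem for ergodic maps (two-sided version). -/
lemma ergodic_tendsto_average (hT : Ergodic T μ) (hgm : Measurable g) (hg : Integrable g μ) :
    ∀ᵐ ω ∂μ, Tendsto (fun n : ℕ => birkhoffSum T g n ω / n) atTop
      (nhds (∫ x, g x ∂μ)) := by
  set I : ℝ := ∫ x, g x ∂μ with hI
  have hneg : ∀ (n : ℕ) (ω : α), birkhoffSum T (fun x => -g x) n ω = -birkhoffSum T g n ω := by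
    intro n ω; simp [birkhoffSum]
  have hcomb : ∀ᵐ ω ∂μ, ∀ k : ℕ,
      (∀ᶠ n : ℕ in atTop, (I - 1 / (k + 1)) * n < birkhoffSum T g n ω) ∧
      (∀ᶠ n : ℕ in atTop, (-I - 1 / (k + 1)) * n < -birkhoffSum T g n ω) := by
    rw [ae_all_iff]
    intro k
    have hk1 : (0 : ℝ) < 1 / (k + 1) := by positivity
    have h1 := ergodic_eventually_gt hT hgm hg (d := I - 1 / (k + 1)) (by rw [← hI]; linarith)
    have h2 := ergodic_eventually_gt hT (hgm.neg) (hg.neg) (d := -I - 1 / (k + 1)) (by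
      rw [integral_neg', ← hI]; linarith)
    filter_upwards [h1, h2] with ω hω1 hω2
    refine ⟨hω1, ?_⟩
    filter_upwards [hω2] with n hn
    rw [← hneg n ω]
    exact hn
  filter_upwards [hcomb] with ω hω
  rw [Metric.tendsto_atTop]
  intro ε hε
  obtain ⟨k, hk⟩ := exists_nat_one_div_lt hε
  obtain ⟨N1, h1⟩ := eventually_atTop.mp (hω k).1
  obtain ⟨N2, h2⟩ := eventually_atTop.mp (hω k).2
  refine ⟨max (max N1 N2) 1, fun n hn => ?_⟩
  have hn1 : N1 ≤ n := le_trans (le_trans (le_max_left _ _) (le_max_left _ _)) hn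
  have hn2 : N2 ≤ n := le_trans (le_trans (le_max_right _ _) (le_max_left _ _)) hn
  have hnpos : (0 : ℝ) < n := by
    have : 1 ≤ n := le_trans (le_max_right _ _) hn
    exact_mod_cast this
  have ha := h1 n hn1
  have hb := h2 n hn2
  rw [Real.dist_eq, abs_lt]
  constructor
  · have : I - 1 / (k + 1) < birkhoffSum T g n ω / n := by
      rw [lt_div_iff₀ hnpos]; linarith
    have hke : (1 : ℝ) / (k + 1) < ε := by exact_mod_cast hk
    linarith
  · have : birkhoffSum T g n ω / n < I + 1 / (k + 1) := by
      rw [div_lt_iff₀ hnpos]; linarith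
    have hke : (1 : ℝ) / (k + 1) < ε := by exact_mod_cast hk
    linarith

end Ergodic
section BC
variable {α : Type*} [MeasurableSpace α] {μ : Measure α} [IsProbabilityMeasure μ]

lemma tsum_Ioi_lt_top {X : α → ℝ} (hX : Integrable X μ) (hnn : 0 ≤ X) :
    (∑' j : ℕ, μ {ω | X ω ∈ Set.Ioi (j : ℝ)}) < ⊤ := by
  letI : MeasureSpace α := { volume := μ }
  exact ProbabilityTheory.tsum_prob_mem_Ioi_lt_top hX hnn

/-- Borel–Cantelli argument: if each `f n` is distributed as an integrable nonnegative
`g0`, then `f n ≤ ε n` eventually, almost surely. -/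
lemma ae_eventually_le_of_dist {f : ℕ → α → ℝ} {g0 : α → ℝ}
    (hg0 : Integrable g0 μ) (hnn : ∀ ω, 0 ≤ g0 ω)
    (hdist : ∀ (n : ℕ) (c : ℝ), 0 < c → μ {ω | c < f n ω} = μ {ω | c < g0 ω})
    {ε : ℝ} (hε : 0 < ε) :
    ∀ᵐ ω ∂μ, ∀ᶠ n : ℕ in atTop, f n ω ≤ ε * n := by
  set s : ℕ → Set α := fun n => if n = 0 then ∅ else {ω | ε * n < f n ω} with hs
  have hsum : (∑' n, μ (s n)) ≠ ⊤ := by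
    have hX : Integrable (fun ω => g0 ω / ε) μ := hg0.div_const ε
    have hXnn : 0 ≤ fun ω => g0 ω / ε := fun ω => div_nonneg (hnn ω) hε.le
    have htop := tsum_Ioi_lt_top hX hXnn
    refine ne_of_lt (lt_of_le_of_lt (ENNReal.tsum_le_tsum fun n => ?_) htop)
    rcases Nat.eq_zero_or_pos n with rfl | hn
    · simp [hs]
    · have h1 : s n = {ω | ε * n < f n ω} := by simp [hs, Nat.pos_iff_ne_zero.mp hn]
      have h2 : (0 : ℝ) < ε * n := by
        have : (0 : ℝ) < n := by exact_mod_cast hn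
        positivity
      rw [h1, hdist n _ h2]
      refine measure_mono fun ω hω => ?_
      have : ε * n < g0 ω := hω
      simp only [Set.mem_setOf_eq, Set.mem_Ioi]
      rw [lt_div_iff₀ hε]
      linarith
  filter_upwards [ae_eventually_notMem hsum] with ω hω
  filter_upwards [hω, eventually_ge_atTop 1] with n h1 h2
  have : ω ∉ {ω | ε * n < f n ω} := by
    intro hmem
    exact h1 (by simpa [hs, Nat.pos_iff_ne_zero.mp h2] using hmem)
  simpa using not_lt.mp this

end BC

end BCAux




set_option maxHeartbeats 2000000 in
/-- **Exponential decay of the normalized immigration contribution**: if `Λ(t) > 0` and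
`E log⁺(Y₀(t)/m₀(t)) < ∞`, then almost surely
`limsup (1/n) log (Π_{n+1}(t)⁻¹ Yₙ(t)) ≤ -Λ(t)`. -/
theorem BRWIRE.immigration_decay {Ω : Type} [MeasurableSpace Ω] [StandardBorelSpace Ω]
    {μ : Measure Ω} [IsProbabilityMeasure μ] (X : BRWIRE Ω μ) (t : ℝ) (hΛ : 0 < X.Lambda t)
    (hY : Integrable (fun ω => logPlus (X.Yfun 0 t ω / X.m0 t ω)) μ) :
    ∀ᵐ ω ∂μ,
      limsup (fun n : ℕ => (((n : ℝ)⁻¹ : ℝ) : EReal) *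
          elog (ENNReal.ofReal ((X.Pifun (n + 1) t ω)⁻¹ * X.Yfun n t ω))) atTop
        ≤ ((-X.Lambda t : ℝ) : EReal) := by
  classical
  set g : Ω → ℝ := fun ω => Real.log (X.m0 t ω) with hgdef
  have hm0m : Measurable (X.m0 t) := (X.measm0 t).mono (X.hEG.trans X.hGF) le_rfl
  have hgm : Measurable g := Real.measurable_log.comp hm0m
  have hgint : Integrable g μ := by
    by_contra h
    have h0 : X.Lambda t = 0 := integral_undef h
    rw [h0] at hΛ
    exact lt_irrefl 0 hΛ
  have hbirk := BCAux.ergodic_tendsto_average X.hθ hgm hgint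
  -- measurability of `Y_n(t)`
  set F : (ℕ → ℝ) × ℕ → ℝ := fun q => ∑ i ∈ Finset.range q.2, Real.exp (t * q.1 i) with hFdef
  have hF : Measurable F := by
    refine measurable_from_prod_countable_left fun v => ?_
    simp only [hFdef]
    exact Finset.measurable_sum _ fun i _ => by fun_prop
  set pair : ℕ → Ω → ℕ × (ℕ → ℝ) :=
    fun n ω => ((X.V n ω, fun i => X.SI n i ω) : ℕ × (ℕ → ℝ)) with hpairdef
  have hpair : ∀ n, Measurable (pair n) := fun n =>
    Measurable.prodMk ((X.measV n).mono X.hGF le_rfl)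
      (measurable_pi_lambda _ fun i => (X.measSI n i).mono X.hGF le_rfl)
  have hYeq : ∀ (n : ℕ) (ω : Ω), X.Yfun n t ω = F (Prod.swap (pair n ω)) := by
    intro n ω
    simp only [hFdef, hpairdef, Prod.swap_prod_mk, BRWIRE.Yfun]
  have hYm : ∀ n, Measurable (fun ω => X.Yfun n t ω) := by
    intro n
    have h := (hF.comp measurable_swap).comp (hpair n)
    simp only [hYeq]
    exact h
  -- identical distribution of `logPlus (Y_n(t))`
  have hYdist : ∀ (n : ℕ) (c : ℝ), 0 < c →
      μ {ω | c < logPlus (X.Yfun n t ω)} = μ {ω | c < logPlus (X.Yfun 0 t ω)} := by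
    intro n c _
    have hG : MeasurableSet {p : ℕ × (ℕ → ℝ) | c < logPlus (F (Prod.swap p))} :=
      measurableSet_lt measurable_const
        (measurable_logPlus.comp (hF.comp measurable_swap))
    have h1 : {ω | c < logPlus (X.Yfun n t ω)}
        = (pair n) ⁻¹' {p | c < logPlus (F (Prod.swap p))} := by
      ext ω
      simp only [mem_setOf_eq, mem_preimage, hYeq n ω]
    have h0 : {ω | c < logPlus (X.Yfun 0 t ω)}
        = (pair 0) ⁻¹' {p | c < logPlus (F (Prod.swap p))} := by
      ext ω
      simp only [mem_setOf_eq, mem_preimage, hYeq 0 ω]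
    rw [h1, h0, ← Measure.map_apply (hpair n) hG, ← Measure.map_apply (hpair 0) hG]
    rw [hpairdef]
    rw [X.hYstat n]
  -- identical distribution of `logPlus (m_n(t)⁻¹)`
  have hmdist : ∀ (n : ℕ) (c : ℝ), 0 < c →
      μ {ω | c < logPlus ((X.m0 t (X.θ^[n] ω))⁻¹)}
        = μ {ω | c < logPlus ((X.m0 t ω)⁻¹)} := by
    intro n c _
    have hB : MeasurableSet {ω | c < logPlus ((X.m0 t ω)⁻¹)} :=
      measurableSet_lt measurable_const (measurable_logPlus.comp hm0m.inv)
    exact (X.hθ.toMeasurePreserving.iterate n).measure_preimage hB.nullMeasurableSet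
  -- integrability
  have hlpm : Integrable (fun ω => logPlus (X.m0 t ω)) μ := by
    refine hgint.abs.mono' (measurable_logPlus.comp hm0m).aestronglyMeasurable
      (ae_of_all _ fun ω => ?_)
    rw [Real.norm_eq_abs, abs_of_nonneg (logPlus_nonneg _)]
    exact max_le (le_abs_self _) (abs_nonneg _)
  have hlpminv : Integrable (fun ω => logPlus ((X.m0 t ω)⁻¹)) μ := by
    refine hgint.abs.mono' (measurable_logPlus.comp hm0m.inv).aestronglyMeasurable
      (ae_of_all _ fun ω => ?_)
    rw [Real.norm_eq_abs, abs_of_nonneg (logPlus_nonneg _)]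
    unfold logPlus
    rw [Real.log_inv]
    exact max_le (neg_le_abs _) (abs_nonneg _)
  have hY0nn : ∀ (n : ℕ) (ω : Ω), 0 ≤ X.Yfun n t ω := fun n ω =>
    Finset.sum_nonneg fun i _ => (Real.exp_pos _).le
  have hYint : Integrable (fun ω => logPlus (X.Yfun 0 t ω)) μ := by
    refine (hY.add hlpm).mono' (measurable_logPlus.comp (hYm 0)).aestronglyMeasurable
      (ae_of_all _ fun ω => ?_)
    rw [Real.norm_eq_abs, abs_of_nonneg (logPlus_nonneg _)]
    have hm0pos := X.m0pos t ω
    have hrw : X.Yfun 0 t ω = (X.Yfun 0 t ω / X.m0 t ω) * X.m0 t ω :=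
      (div_mul_cancel₀ _ (ne_of_gt hm0pos)).symm
    calc logPlus (X.Yfun 0 t ω)
        = logPlus ((X.Yfun 0 t ω / X.m0 t ω) * X.m0 t ω) := by rw [← hrw]
      _ ≤ logPlus (X.Yfun 0 t ω / X.m0 t ω) + logPlus (X.m0 t ω) := logPlus_mul_le _ _
  -- Borel-Cantelli estimates
  have hBC1 : ∀ᵐ ω ∂μ, ∀ k : ℕ, ∀ᶠ n : ℕ in atTop,
      logPlus (X.Yfun n t ω) ≤ (1 / (k + 1)) * n := by
    rw [ae_all_iff]
    intro k
    exact BCAux.ae_eventually_le_of_dist hYint (fun ω => logPlus_nonneg _)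
      hYdist (by positivity)
  have hBC2 : ∀ᵐ ω ∂μ, ∀ k : ℕ, ∀ᶠ n : ℕ in atTop,
      logPlus ((X.m0 t (X.θ^[n] ω))⁻¹) ≤ (1 / (k + 1)) * n := by
    rw [ae_all_iff]
    intro k
    exact BCAux.ae_eventually_le_of_dist hlpminv (fun ω => logPlus_nonneg _)
      hmdist (by positivity)
  -- pointwise conclusion
  filter_upwards [hbirk, hBC1, hBC2] with ω hS hP1 hP2
  have hS' : Tendsto (fun n : ℕ => birkhoffSum X.θ g n ω / n) atTop (𝓝 (X.Lambda t)) := hS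
  have hmpos : ∀ n : ℕ, 0 < X.m0 t (X.θ^[n] ω) := fun n => X.m0pos t _
  have hPipos : ∀ m : ℕ, 0 < X.Pifun m t ω := fun m =>
    Finset.prod_pos fun i _ => X.m0pos t _
  have hlogPi : ∀ m : ℕ, Real.log (X.Pifun m t ω) = birkhoffSum X.θ g m ω := by
    intro m
    rw [show X.Pifun m t ω = ∏ i ∈ Finset.range m, X.m0 t (X.θ^[i] ω) from rfl]
    rw [Real.log_prod fun i _ => ne_of_gt (X.m0pos t _)]
    rfl
  -- the `logPlus` part tends to 0
  have hP0 : Tendsto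
      (fun n : ℕ => (n : ℝ)⁻¹ * logPlus (X.Yfun n t ω / X.m0 t (X.θ^[n] ω)))
      atTop (𝓝 0) := by
    rw [tendsto_order]
    constructor
    · intro a ha
      refine Eventually.of_forall fun n => lt_of_lt_of_le ha ?_
      exact mul_nonneg (inv_nonneg.2 (Nat.cast_nonneg n)) (logPlus_nonneg _)
    · intro a ha
      obtain ⟨k, hk⟩ := exists_nat_one_div_lt (half_pos ha)
      filter_upwards [hP1 k, hP2 k, eventually_ge_atTop 1] with n h1 h2 hn1
      have hnpos : (0 : ℝ) < n := by exact_mod_cast hn1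
      have hb : logPlus (X.Yfun n t ω / X.m0 t (X.θ^[n] ω))
          ≤ logPlus (X.Yfun n t ω) + logPlus ((X.m0 t (X.θ^[n] ω))⁻¹) := by
        rw [div_eq_mul_inv]
        exact logPlus_mul_le _ _
      have hsum : logPlus (X.Yfun n t ω / X.m0 t (X.θ^[n] ω))
          ≤ (1 / (k + 1)) * n + (1 / (k + 1)) * n := le_trans hb (add_le_add h1 h2)
      have hcalc : (n : ℝ)⁻¹ * ((1 / (k + 1)) * n + (1 / (k + 1)) * n)
          = 2 * (1 / ((k : ℝ) + 1)) := by
        field_simp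
        ring
      have hlt : 2 * (1 / ((k : ℝ) + 1)) < a := by
        have : (1 : ℝ) / (k + 1) < a / 2 := hk
        linarith
      calc (n : ℝ)⁻¹ * logPlus (X.Yfun n t ω / X.m0 t (X.θ^[n] ω))
          ≤ (n : ℝ)⁻¹ * ((1 / (k + 1)) * n + (1 / (k + 1)) * n) :=
            mul_le_mul_of_nonneg_left hsum (inv_nonneg.2 hnpos.le)
        _ = 2 * (1 / ((k : ℝ) + 1)) := hcalc
        _ < a := hlt
  have hr : Tendsto
      (fun n : ℕ => (n : ℝ)⁻¹ * logPlus (X.Yfun n t ω / X.m0 t (X.θ^[n] ω))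
        - birkhoffSum X.θ g n ω / n) atTop (𝓝 (-X.Lambda t)) := by
    have := hP0.sub hS'
    rwa [zero_sub] at this
  -- eventual domination in `EReal`
  have hdom : ∀ᶠ n : ℕ in atTop,
      (((n : ℝ)⁻¹ : ℝ) : EReal) *
          elog (ENNReal.ofReal ((X.Pifun (n + 1) t ω)⁻¹ * X.Yfun n t ω))
        ≤ (((n : ℝ)⁻¹ * logPlus (X.Yfun n t ω / X.m0 t (X.θ^[n] ω))
            - birkhoffSum X.θ g n ω / n : ℝ) : EReal) := by
    filter_upwards [eventually_ge_atTop 1] with n hn1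
    have hnpos : (0 : ℝ) < n := by exact_mod_cast hn1
    by_cases hYzero : X.Yfun n t ω = 0
    · rw [hYzero, mul_zero, ENNReal.ofReal_zero]
      rw [show elog 0 = ⊥ from by simp [elog]]
      rw [EReal.mul_bot_of_pos (EReal.coe_pos.2 (inv_pos.2 hnpos))]
      exact bot_le
    · have hYpos : 0 < X.Yfun n t ω := lt_of_le_of_ne (hY0nn n ω) (Ne.symm hYzero)
      have hxpos : 0 < (X.Pifun (n + 1) t ω)⁻¹ * X.Yfun n t ω :=
        mul_pos (inv_pos.2 (hPipos _)) hYpos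
      have helog : elog (ENNReal.ofReal ((X.Pifun (n + 1) t ω)⁻¹ * X.Yfun n t ω))
          = ((Real.log ((X.Pifun (n + 1) t ω)⁻¹ * X.Yfun n t ω) : ℝ) : EReal) := by
        rw [elog, if_neg, if_neg]
        · rw [ENNReal.toReal_ofReal hxpos.le]
        · exact ENNReal.ofReal_ne_top
        · simp only [ENNReal.ofReal_eq_zero, not_le]
          exact hxpos
      rw [helog, ← EReal.coe_mul, EReal.coe_le_coe_iff]
      have hlogx : Real.log ((X.Pifun (n + 1) t ω)⁻¹ * X.Yfun n t ω)
          = Real.log (X.Yfun n t ω) - birkhoffSum X.θ g (n + 1) ω := by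
        rw [Real.log_mul (inv_ne_zero (ne_of_gt (hPipos _))) hYzero, Real.log_inv,
          hlogPi]
        ring
      have hsucc : birkhoffSum X.θ g (n + 1) ω
          = birkhoffSum X.θ g n ω + Real.log (X.m0 t (X.θ^[n] ω)) :=
        birkhoffSum_succ _ _ _ _
      have hdivlog : Real.log (X.Yfun n t ω) - Real.log (X.m0 t (X.θ^[n] ω))
          ≤ logPlus (X.Yfun n t ω / X.m0 t (X.θ^[n] ω)) := by
        rw [← Real.log_div hYzero (ne_of_gt (hmpos n))]
        exact le_max_left _ _
      rw [hlogx, hsucc]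
      have hkey : Real.log (X.Yfun n t ω)
            - (birkhoffSum X.θ g n ω + Real.log (X.m0 t (X.θ^[n] ω)))
          ≤ logPlus (X.Yfun n t ω / X.m0 t (X.θ^[n] ω)) - birkhoffSum X.θ g n ω := by
        linarith
      calc (n : ℝ)⁻¹ * (Real.log (X.Yfun n t ω)
            - (birkhoffSum X.θ g n ω + Real.log (X.m0 t (X.θ^[n] ω))))
          ≤ (n : ℝ)⁻¹ * (logPlus (X.Yfun n t ω / X.m0 t (X.θ^[n] ω))
            - birkhoffSum X.θ g n ω) :=
            mul_le_mul_of_nonneg_left hkey (inv_nonneg.2 hnpos.le)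
        _ = (n : ℝ)⁻¹ * logPlus (X.Yfun n t ω / X.m0 t (X.θ^[n] ω))
            - birkhoffSum X.θ g n ω / n := by ring
  calc limsup (fun n : ℕ => (((n : ℝ)⁻¹ : ℝ) : EReal) *
          elog (ENNReal.ofReal ((X.Pifun (n + 1) t ω)⁻¹ * X.Yfun n t ω))) atTop
      ≤ limsup (fun n : ℕ => (((n : ℝ)⁻¹ * logPlus (X.Yfun n t ω / X.m0 t (X.θ^[n] ω))
            - birkhoffSum X.θ g n ω / n : ℝ) : EReal)) atTop :=
        limsup_le_limsup hdom
    _ = ((-X.Lambda t : ℝ) : EReal) := (EReal.tendsto_coe.2 hr).limsup_eq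

end
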